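/- arXiv:2006.06904 — 3 statements merged into one kernel-verified Lean document; each statement's English description precedes it below -/
import Mathlib

section
/- For every natural number p, [p]_v! · ∑_{k+m=p, k,m ≥ 0} v^{-2(k-1)m - p(3-p)/2} / ([2k]_v!! · [2m]_v!!) = 1 in ℚ(v). -/
open scoped BigOperators
open Finset

noncomputable section

abbrev K : Type := RatFunc ℚ

def v : K := RatFunc.X

/-- Balanced quantum integer `[n]_v = (v^n - v^{-n})/(v - v⁻¹)`. -/
def qint (n : ℤ) : K := (v ^ n - v ^ (-n)) / (v - v⁻¹)

/-- Balanced quantum factorial `[n]_v!`. -/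
def qfact : ℕ → K
  | 0 => 1
  | n + 1 => qfact n * qint ((n : ℤ) + 1)

/-- Balanced Gaussian binomial coefficient `[p choose t]_v`. -/
def qbinom (p t : ℕ) : K := qfact p / (qfact t * qfact (p - t))

/-- Quantum double factorial `[2k]_v!! = [2k]_v [2k-2]_v ⋯ [2]_v`. -/
def ddfact : ℕ → K
  | 0 => 1
  | k + 1 => ddfact k * qint (2 * ((k : ℤ) + 1))

/- ### Auxiliary lemmas -/

lemma hv : v ≠ 0 := RatFunc.X_ne_zero

lemma vadd (a b : ℤ) : v ^ (a + b) = v ^ a * v ^ b := zpow_add₀ hv a b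

lemma vpow_ne_one (n : ℕ) (hn : 0 < n) : (v : K) ^ n ≠ 1 := by
  intro h
  have h2 : (algebraMap (Polynomial ℚ) K) (Polynomial.X ^ n) =
      (algebraMap (Polynomial ℚ) K) 1 := by
    simpa [map_pow, RatFunc.algebraMap_X, v] using h
  have h3 := RatFunc.algebraMap_injective ℚ h2
  have h4 := congrArg Polynomial.natDegree h3
  simp [Polynomial.natDegree_X_pow] at h4
  omega

lemma vpow_ne_negone (n : ℕ) (hn : 0 < n) : (v : K) ^ n ≠ -1 := by
  intro h
  have h2 : (algebraMap (Polynomial ℚ) K) (Polynomial.X ^ n) =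
      (algebraMap (Polynomial ℚ) K) (-1) := by
    simpa [map_pow, RatFunc.algebraMap_X, v] using h
  have h3 := RatFunc.algebraMap_injective ℚ h2
  have h4 := congrArg Polynomial.natDegree h3
  simp [Polynomial.natDegree_X_pow] at h4
  omega

lemma hd : v - v⁻¹ ≠ 0 := by
  intro h
  apply vpow_ne_one 2 (by norm_num)
  have h1 : v = v⁻¹ := sub_eq_zero.mp h
  calc v ^ 2 = v * v := sq v
    _ = v * v⁻¹ := by nth_rewrite 2 [h1]; rfl
    _ = 1 := mul_inv_cancel₀ hv

lemma qint_ne_zero (n : ℤ) (hn : 0 < n) : qint n ≠ 0 := by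
  obtain ⟨m, rfl⟩ := Int.eq_ofNat_of_zero_le hn.le
  have hm : 0 < m := by exact_mod_cast hn
  apply div_ne_zero _ hd
  intro h
  apply vpow_ne_one (2 * m) (by omega)
  have h1 : v ^ (m : ℤ) = v ^ (-(m : ℤ)) := sub_eq_zero.mp h
  have h2 : v ^ ((m : ℤ) + m) = v ^ (-(m : ℤ) + m) := by
    rw [vadd, vadd, h1]
  rw [show -(m : ℤ) + m = 0 from by ring, zpow_zero,
    show (m : ℤ) + m = ((2 * m : ℕ) : ℤ) from by push_cast; ring, zpow_natCast] at h2
  exact h2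

lemma qint_zero : qint 0 = 0 := by
  simp [qint]

lemma ddfact_ne_zero (k : ℕ) : ddfact k ≠ 0 := by
  induction k with
  | zero => simp [ddfact]
  | succ n ih =>
    simp only [ddfact]
    exact mul_ne_zero ih (qint_ne_zero _ (by positivity))

lemma qfact_ne_zero (k : ℕ) : qfact k ≠ 0 := by
  induction k with
  | zero => simp [qfact]
  | succ n ih =>
    simp only [qfact]
    exact mul_ne_zero ih (qint_ne_zero _ (by positivity))

lemma qint_add (A B : ℤ) : qint (A + B) = v ^ (-B) * qint A + v ^ A * qint B := by
  unfold qint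
  rw [← mul_div_assoc, ← mul_div_assoc, ← add_div]
  congr 1
  rw [vadd A B, show -(A + B) = -A + -B from by ring, vadd (-A) (-B)]
  ring

lemma qint_double (n : ℤ) : qint (2 * n) = (v ^ n + v ^ (-n)) * qint n := by
  unfold qint
  rw [← mul_div_assoc]
  congr 1
  rw [show 2 * n = n + n from by ring, vadd n n,
    show -(n + n) = -n + -n from by ring, vadd (-n) (-n)]
  ring

lemma cancelD (x B C q D : K) (hq : q ≠ 0) (h : D = q * (B * C)) :
    q * (x / D) = x / (B * C) := by
  rw [h, ← div_div, ← mul_div_assoc, mul_comm q (x / q), div_mul_cancel₀ x hq]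

/-- The exponent appearing in the sum. -/
def Ee (p k : ℤ) : ℤ := -(2 * (k - 1) * (p - k)) - p * (3 - p) / 2

lemma hD (p : ℤ) : (p + 1) * (3 - (p + 1)) / 2 = p * (3 - p) / 2 + (1 - p) := by
  rw [show (p + 1) * (3 - (p + 1)) = p * (3 - p) + (1 - p) * 2 from by ring,
    Int.add_mul_ediv_right _ _ (by norm_num : (2 : ℤ) ≠ 0)]

lemma e1 (p k : ℤ) : Ee (p + 1) (k + 1) = (2 * k - p - 1) + Ee p k := by
  unfold Ee; rw [hD p]; ring

lemma e2 (p k : ℤ) : Ee (p + 1) k = (p + 1 - 2 * k) + Ee p k := by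
  unfold Ee; rw [hD p]; ring

lemma e3 (p k : ℤ) : Ee p (p - k) = (4 * k - 2 * p) + Ee p k := by
  unfold Ee; ring

/-- The summand. -/
def aterm (p k : ℕ) : K := v ^ (Ee (p : ℤ) (k : ℤ)) / (ddfact k * ddfact (p - k))

lemma t2 (p k : ℕ) (h : k ≤ p) :
    v ^ (2 * (k : ℤ)) * qint (2 * ((p : ℤ) + 1) - 2 * (k : ℤ)) * aterm (p + 1) k
      = v ^ ((p : ℤ) + 1) * aterm p k := by
  have hq : qint (2 * (((p - k : ℕ) : ℤ) + 1)) ≠ 0 := qint_ne_zero _ (by positivity)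
  unfold aterm
  rw [show p + 1 - k = (p - k) + 1 from by omega,
    show 2 * ((p : ℤ) + 1) - 2 * (k : ℤ) = 2 * (((p - k : ℕ) : ℤ) + 1) from by
      push_cast [h]; ring,
    mul_assoc,
    cancelD _ (ddfact k) (ddfact (p - k)) _ _ hq (by
      simp only [ddfact]; ring),
    ← mul_div_assoc, ← mul_div_assoc, ← vadd, ← vadd]
  congr 2
  rw [show ((p + 1 : ℕ) : ℤ) = (p : ℤ) + 1 from by push_cast; ring, e2]
  ring

lemma t1 (p k : ℕ) (h : k ≤ p) :
    v ^ (2 * ((k + 1 : ℕ) : ℤ) - 2 * ((p : ℤ) + 1)) * qint (2 * ((k + 1 : ℕ) : ℤ))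
        * aterm (p + 1) (k + 1)
      = v ^ (4 * (k : ℤ) - 3 * (p : ℤ) - 1 + Ee (p : ℤ) (k : ℤ))
          / (ddfact k * ddfact (p - k)) := by
  have hq : qint (2 * ((k : ℤ) + 1)) ≠ 0 := qint_ne_zero _ (by positivity)
  unfold aterm
  rw [show (p + 1) - (k + 1) = p - k from by omega,
    show 2 * ((k + 1 : ℕ) : ℤ) = 2 * ((k : ℤ) + 1) from by push_cast; ring,
    mul_assoc,
    cancelD _ (ddfact k) (ddfact (p - k)) _ _ hq (by
      simp only [ddfact]; ring),
    ← mul_div_assoc, ← vadd]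
  congr 1
  rw [show ((p + 1 : ℕ) : ℤ) = (p : ℤ) + 1 from by push_cast; ring,
    show ((k + 1 : ℕ) : ℤ) = (k : ℤ) + 1 from by push_cast; ring, e1]
  ring

lemma rev (p : ℕ) :
    ∑ k ∈ range (p + 1),
        v ^ (4 * (k : ℤ) - 3 * (p : ℤ) - 1 + Ee (p : ℤ) (k : ℤ))
          / (ddfact k * ddfact (p - k))
      = v ^ (-((p : ℤ) + 1)) * ∑ k ∈ range (p + 1), aterm p k := by
  rw [mul_sum,
    ← Finset.sum_range_reflect
      (fun k => v ^ (4 * (k : ℤ) - 3 * (p : ℤ) - 1 + Ee (p : ℤ) (k : ℤ))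
        / (ddfact k * ddfact (p - k))) (p + 1)]
  apply Finset.sum_congr rfl
  intro k hk
  have h : k ≤ p := Nat.lt_succ_iff.mp (mem_range.mp hk)
  rw [show p + 1 - 1 - k = p - k from by omega,
    show p - (p - k) = k from by omega]
  unfold aterm
  rw [← mul_div_assoc, ← vadd]
  rw [mul_comm (ddfact (p - k)) (ddfact k)]
  congr 1
  rw [Nat.cast_sub h, e3]
  ring

lemma key (p : ℕ) :
    qint ((p : ℤ) + 1) * ∑ k ∈ range (p + 1 + 1), aterm (p + 1) k
      = ∑ k ∈ range (p + 1), aterm p k := by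
  have hc : v ^ ((p : ℤ) + 1) + v ^ (-((p : ℤ) + 1)) ≠ 0 := by
    intro h
    apply vpow_ne_negone (2 * (p + 1)) (by omega)
    have h1 : v ^ ((p : ℤ) + 1) = -v ^ (-((p : ℤ) + 1)) :=
      eq_neg_of_add_eq_zero_left h
    have h2 : v ^ (((p : ℤ) + 1) + ((p : ℤ) + 1)) = -v ^ ((-((p : ℤ) + 1)) + ((p : ℤ) + 1)) := by
      rw [vadd ((p : ℤ) + 1) ((p : ℤ) + 1), vadd (-((p : ℤ) + 1)) ((p : ℤ) + 1), h1]; ring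
    rw [show (-((p : ℤ) + 1)) + ((p : ℤ) + 1) = 0 from by ring, zpow_zero,
      show ((p : ℤ) + 1) + ((p : ℤ) + 1) = ((2 * (p + 1) : ℕ) : ℤ) from by push_cast; ring,
      zpow_natCast] at h2
    exact h2
  apply mul_left_cancel₀ hc
  rw [← mul_assoc, ← qint_double, mul_sum]
  have step : ∀ k ∈ range (p + 1 + 1),
      qint (2 * ((p : ℤ) + 1)) * aterm (p + 1) k
        = v ^ (2 * (k : ℤ) - 2 * ((p : ℤ) + 1)) * qint (2 * (k : ℤ)) * aterm (p + 1) k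
          + v ^ (2 * (k : ℤ)) * qint (2 * ((p : ℤ) + 1) - 2 * (k : ℤ)) * aterm (p + 1) k := by
    intro k _
    rw [← add_mul]
    congr 1
    have h := qint_add (2 * (k : ℤ)) (2 * ((p : ℤ) + 1) - 2 * (k : ℤ))
    rw [show 2 * (k : ℤ) + (2 * ((p : ℤ) + 1) - 2 * (k : ℤ)) = 2 * ((p : ℤ) + 1)
      from by ring] at h
    rw [h, show -(2 * ((p : ℤ) + 1) - 2 * (k : ℤ)) = 2 * (k : ℤ) - 2 * ((p : ℤ) + 1)
      from by ring]
  rw [Finset.sum_congr rfl step, Finset.sum_add_distrib]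
  rw [Finset.sum_range_succ'
    (fun k => v ^ (2 * (k : ℤ) - 2 * ((p : ℤ) + 1)) * qint (2 * (k : ℤ)) * aterm (p + 1) k)
    (p + 1)]
  rw [Finset.sum_range_succ
    (fun k => v ^ (2 * (k : ℤ)) * qint (2 * ((p : ℤ) + 1) - 2 * (k : ℤ)) * aterm (p + 1) k)
    (p + 1)]
  have h0 : v ^ (2 * ((0 : ℕ) : ℤ) - 2 * ((p : ℤ) + 1)) * qint (2 * ((0 : ℕ) : ℤ))
      * aterm (p + 1) 0 = 0 := by
    norm_num [qint_zero]
  have hlast : v ^ (2 * (((p + 1 : ℕ)) : ℤ)) * qint (2 * ((p : ℤ) + 1) - 2 * (((p + 1 : ℕ)) : ℤ))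
      * aterm (p + 1) (p + 1) = 0 := by
    rw [show 2 * ((p : ℤ) + 1) - 2 * (((p + 1 : ℕ)) : ℤ) = 0 from by push_cast; ring, qint_zero]
    ring
  rw [h0, hlast, add_zero, add_zero]
  rw [Finset.sum_congr rfl (fun k hk => t1 p k (Nat.lt_succ_iff.mp (mem_range.mp hk)))]
  rw [Finset.sum_congr rfl (fun k hk => t2 p k (Nat.lt_succ_iff.mp (mem_range.mp hk)))]
  rw [rev p, ← mul_sum]
  ring

lemma main (p : ℕ) : qfact p * ∑ k ∈ range (p + 1), aterm p k = 1 := by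
  induction p with
  | zero =>
    norm_num [aterm, Ee, qfact, ddfact]
  | succ p ih =>
    rw [show qfact (p + 1) = qfact p * qint ((p : ℤ) + 1) from rfl,
      mul_assoc, key p, ih]

/-- . -/
theorem qfact_ddfact_sum_eq_one (p : ℕ) :
    qfact p * ∑ k ∈ range (p + 1),
      v ^ (-(2 * ((k : ℤ) - 1) * ((p : ℤ) - (k : ℤ))) - ((p : ℤ) * (3 - (p : ℤ))) / 2)
        / (ddfact k * ddfact (p - k)) = 1 := by
  exact main p
end
end

section
/- For every integer d ≥ 1, ∑_{k+m+r=d, k,m,r ≥ 0} (-1)^r · v^{r(r+1)/2 - 2(k-1)m} / ([r]_v! · [2k]_v!! · [2m]_v!!) = 0 in ℚ(v). -/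
open scoped BigOperators
open Finset

noncomputable section

namespace TSV

lemma v_ne : v ≠ 0 := RatFunc.X_ne_zero

lemma ratfunc_ne {p : Polynomial ℚ} (h : p ≠ 0) : (algebraMap (Polynomial ℚ) K) p ≠ 0 :=
  RatFunc.algebraMap_ne_zero h

/-- `hh n = n(n-1)/2` defined recursively. -/
def hh : ℕ → ℕ
  | 0 => 0
  | n + 1 => hh n + n

lemma hh_succ (n : ℕ) : hh (n + 1) = hh n + n := rfl

lemma two_hh (n : ℕ) : 2 * hh (n + 1) = n * (n + 1) := by
  induction n with
  | zero => rfl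
  | succ n ih =>
    have h1 := hh_succ (n + 1)
    have e : (n + 1) * (n + 1 + 1) = n * (n + 1) + 2 * (n + 1) := by ring
    omega

lemma hh_add (n : ℕ) : hh (n + 1) + hh n = n * n := by
  induction n with
  | zero => rfl
  | succ n ih =>
    have h1 := hh_succ (n + 1)
    have h2 := hh_succ n
    have e : (n + 1) * (n + 1) = n * n + 2 * n + 1 := by ring
    omega

lemma hh_cast (r : ℕ) : ((r : ℤ) * ((r : ℤ) + 1)) / 2 = (hh (r + 1) : ℤ) := by
  have h : (2 : ℤ) * (hh (r + 1) : ℤ) = (r : ℤ) * ((r : ℤ) + 1) := by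
    exact_mod_cast two_hh r
  omega

def qi2 (n : ℕ) : K := ∑ i ∈ range n, v ^ (2 * i)
def qi4 (n : ℕ) : K := ∑ i ∈ range n, v ^ (4 * i)

def qfa2 : ℕ → K
  | 0 => 1
  | n + 1 => qfa2 n * qi2 (n + 1)

def qfa4 : ℕ → K
  | 0 => 1
  | n + 1 => qfa4 n * qi4 (n + 1)

def pf (n : ℕ) : K := ∏ i ∈ range n, (1 + v ^ (2 * (i + 1)))

lemma geom_ne (c n : ℕ) (h : 1 ≤ n) : (∑ i ∈ range n, v ^ (c * i)) ≠ 0 := by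
  have key : (∑ i ∈ range n, v ^ (c * i))
      = algebraMap (Polynomial ℚ) K (∑ i ∈ range n, Polynomial.X ^ (c * i)) := by
    rw [map_sum]
    simp [v, map_pow]
  rw [key]
  apply ratfunc_ne
  intro h0
  have h1 := congrArg (Polynomial.eval 1) h0
  simp [Polynomial.eval_finset_sum] at h1
  omega

lemma qi2_ne {n : ℕ} (h : 1 ≤ n) : qi2 n ≠ 0 := geom_ne 2 n h
lemma qi4_ne {n : ℕ} (h : 1 ≤ n) : qi4 n ≠ 0 := geom_ne 4 n h

lemma one_add_ne (m : ℕ) : (1 : K) + v ^ m ≠ 0 := by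
  have key : (1 : K) + v ^ m = algebraMap (Polynomial ℚ) K (1 + Polynomial.X ^ m) := by
    simp [v, map_pow]
  rw [key]
  apply ratfunc_ne
  intro h0
  have h1 := congrArg (Polynomial.eval 2) h0
  simp [Polynomial.eval_pow] at h1
  have h2 : (0:ℚ) < 1 + 2 ^ m := by positivity
  linarith

lemma qfa2_ne (n : ℕ) : qfa2 n ≠ 0 := by
  induction n with
  | zero => exact one_ne_zero
  | succ n ih => exact mul_ne_zero ih (qi2_ne n.succ_pos)

lemma qfa4_ne (n : ℕ) : qfa4 n ≠ 0 := by
  induction n with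
  | zero => exact one_ne_zero
  | succ n ih => exact mul_ne_zero ih (qi4_ne n.succ_pos)

lemma pf_ne (n : ℕ) : pf n ≠ 0 :=
  prod_ne_zero_iff.mpr fun i _ => one_add_ne _

/-- Pascal-style binomial, base `v^2`. -/
def qc : ℕ → ℕ → K
  | _, 0 => 1
  | 0, _ + 1 => 0
  | n + 1, k + 1 => v ^ (2 * (k + 1)) * qc n (k + 1) + qc n k

/-- Pascal-style binomial, base `v^4`. -/
def qb : ℕ → ℕ → K
  | _, 0 => 1
  | 0, _ + 1 => 0
  | n + 1, k + 1 => v ^ (4 * (k + 1)) * qb n (k + 1) + qb n k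

lemma qc_of_lt : ∀ {n k : ℕ}, n < k → qc n k = 0
  | 0, _ + 1, _ => rfl
  | n + 1, k + 1, h => by
    show v ^ (2 * (k + 1)) * qc n (k + 1) + qc n k = 0
    rw [qc_of_lt (by omega : n < k + 1), qc_of_lt (by omega : n < k)]
    ring

lemma qb_of_lt : ∀ {n k : ℕ}, n < k → qb n k = 0
  | 0, _ + 1, _ => rfl
  | n + 1, k + 1, h => by
    show v ^ (4 * (k + 1)) * qb n (k + 1) + qb n k = 0
    rw [qb_of_lt (by omega : n < k + 1), qb_of_lt (by omega : n < k)]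
    ring

lemma geom_add (c a b : ℕ) : (∑ i ∈ range (a + b), v ^ (c * i))
    = (∑ i ∈ range a, v ^ (c * i)) + v ^ (c * a) * ∑ i ∈ range b, v ^ (c * i) := by
  rw [Finset.sum_range_add, mul_sum]
  congr 1
  refine sum_congr rfl fun i _ => ?_
  rw [← pow_add]
  congr 1
  ring

lemma qi2_add (a b : ℕ) : qi2 (a + b) = qi2 a + v ^ (2 * a) * qi2 b := geom_add 2 a b
lemma qi4_add (a b : ℕ) : qi4 (a + b) = qi4 a + v ^ (4 * a) * qi4 b := geom_add 4 a b

lemma qc_zero (n : ℕ) : qc n 0 = 1 := by cases n <;> rfl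
lemma qb_zero (n : ℕ) : qb n 0 = 1 := by cases n <;> rfl

lemma qc_eq {n k : ℕ} (h : k ≤ n) : qc n k = qfa2 n / (qfa2 k * qfa2 (n - k)) := by
  induction n generalizing k with
  | zero =>
    interval_cases k
    simp [qc_zero, qfa2]
  | succ n ih =>
    match k, h with
    | 0, _ =>
      rw [qc_zero]
      rw [show qfa2 0 = 1 from rfl, one_mul, Nat.sub_zero, div_self (qfa2_ne _)]
    | k + 1, h =>
      rcases Nat.lt_or_ge k n with hk | hk
      · have e1 : qc (n+1) (k+1) = v ^ (2*(k+1)) * qc n (k+1) + qc n k := rfl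
        rw [e1, ih (by omega), ih (by omega)]
        have hsplit : qi2 (n+1) = qi2 (k+1) + v ^ (2*(k+1)) * qi2 (n - k) := by
          have h2 := qi2_add (k+1) (n-k)
          rw [show k+1+(n-k) = n+1 by omega] at h2
          exact h2
        have f3 : qfa2 (n-k) = qfa2 (n-(k+1)) * qi2 (n-k) := by
          rw [show n - k = (n - (k+1)) + 1 by omega]
          rfl
        rw [Nat.succ_sub_succ, show qfa2 (n+1) = qfa2 n * qi2 (n+1) from rfl, hsplit, f3,
          show qfa2 (k+1) = qfa2 k * qi2 (k+1) from rfl]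
        have n1 := qfa2_ne n
        have n2 := qfa2_ne k
        have n3 := qfa2_ne (n-(k+1))
        have n4 := qi2_ne (Nat.succ_pos k)
        have n5 : qi2 (n-k) ≠ 0 := qi2_ne (by omega)
        have n6 : v ≠ 0 := v_ne
        field_simp
        ring
      · have hk' : k = n := by omega
        subst hk'
        have e1 : qc (k+1) (k+1) = v ^ (2*(k+1)) * qc k (k+1) + qc k k := rfl
        rw [e1, qc_of_lt (by omega), ih le_rfl, Nat.sub_self, Nat.sub_self,
          show qfa2 0 = 1 from rfl]
        rw [mul_zero, zero_add, mul_one, mul_one, div_self (qfa2_ne k), div_self (qfa2_ne (k+1))]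

lemma qb_eq {n k : ℕ} (h : k ≤ n) : qb n k = qfa4 n / (qfa4 k * qfa4 (n - k)) := by
  induction n generalizing k with
  | zero =>
    interval_cases k
    simp [qb_zero, qfa4]
  | succ n ih =>
    match k, h with
    | 0, _ =>
      rw [qb_zero]
      rw [show qfa4 0 = 1 from rfl, one_mul, Nat.sub_zero, div_self (qfa4_ne _)]
    | k + 1, h =>
      rcases Nat.lt_or_ge k n with hk | hk
      · have e1 : qb (n+1) (k+1) = v ^ (4*(k+1)) * qb n (k+1) + qb n k := rfl
        rw [e1, ih (by omega), ih (by omega)]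
        have hsplit : qi4 (n+1) = qi4 (k+1) + v ^ (4*(k+1)) * qi4 (n - k) := by
          have h2 := qi4_add (k+1) (n-k)
          rw [show k+1+(n-k) = n+1 by omega] at h2
          exact h2
        have f3 : qfa4 (n-k) = qfa4 (n-(k+1)) * qi4 (n-k) := by
          rw [show n - k = (n - (k+1)) + 1 by omega]
          rfl
        rw [Nat.succ_sub_succ, show qfa4 (n+1) = qfa4 n * qi4 (n+1) from rfl, hsplit, f3,
          show qfa4 (k+1) = qfa4 k * qi4 (k+1) from rfl]
        have n1 := qfa4_ne n
        have n2 := qfa4_ne k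
        have n3 := qfa4_ne (n-(k+1))
        have n4 := qi4_ne (Nat.succ_pos k)
        have n5 : qi4 (n-k) ≠ 0 := qi4_ne (by omega)
        have n6 : v ≠ 0 := v_ne
        field_simp
        ring
      · have hk' : k = n := by omega
        subst hk'
        have e1 : qb (k+1) (k+1) = v ^ (4*(k+1)) * qb k (k+1) + qb k k := rfl
        rw [e1, qb_of_lt (by omega), ih le_rfl, Nat.sub_self, Nat.sub_self,
          show qfa4 0 = 1 from rfl]
        rw [mul_zero, zero_add, mul_one, mul_one, div_self (qfa4_ne k), div_self (qfa4_ne (k+1))]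

lemma qb_symm {n k : ℕ} (h : k ≤ n) : qb n (n - k) = qb n k := by
  rw [qb_eq h, qb_eq (Nat.sub_le n k), Nat.sub_sub_self h, mul_comm]

lemma sq_sub_one_ne : v ^ 2 - 1 ≠ 0 := by
  have key : v ^ 2 - 1 = algebraMap (Polynomial ℚ) K (Polynomial.X ^ 2 - 1) := by
    simp [v, map_pow]
  rw [key]
  apply ratfunc_ne
  intro h0
  have h1 := congrArg (Polynomial.eval 0) h0
  simp at h1

lemma vsub_eq : v - v⁻¹ = v⁻¹ * (v ^ 2 - 1) := by
  have h : v⁻¹ * v ^ 2 = v := by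
    rw [sq, ← mul_assoc, inv_mul_cancel₀ v_ne, one_mul]
  rw [mul_sub, mul_one, h]

lemma vsub_ne : v - v⁻¹ ≠ 0 := by
  rw [vsub_eq]
  exact mul_ne_zero (inv_ne_zero v_ne) sq_sub_one_ne

lemma qi2_mul (n : ℕ) : qi2 n * (v ^ 2 - 1) = v ^ (2 * n) - 1 := by
  simpa [qi2, pow_mul] using geom_sum_mul (v ^ 2) n

lemma qint_eq (n : ℕ) : qint ((n : ℤ) + 1) = v ^ (-(n : ℤ)) * qi2 (n + 1) := by
  rw [qint, div_eq_iff vsub_ne, vsub_eq]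
  symm
  calc v ^ (-(n:ℤ)) * qi2 (n+1) * (v⁻¹ * (v ^ 2 - 1))
      = v ^ (-(n:ℤ)) * v⁻¹ * (qi2 (n+1) * (v ^ 2 - 1)) := by ring
    _ = v ^ (-((n:ℤ)+1)) * (v ^ (2*(n+1)) - 1) := by
        rw [qi2_mul]
        congr 1
        rw [← zpow_neg_one v, ← zpow_add₀ v_ne]
        congr 1
        ring
    _ = v ^ ((n:ℤ)+1) - v ^ (-((n:ℤ)+1)) := by
        rw [mul_sub, mul_one, ← zpow_natCast v (2*(n+1)), ← zpow_add₀ v_ne]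
        congr 2
        push_cast
        ring

lemma qfact_eq (n : ℕ) : qfact n = v ^ (-(hh n : ℤ)) * qfa2 n := by
  induction n with
  | zero => simp [qfact, qfa2, hh]
  | succ n ih =>
    have h0 : qfact (n+1) = qfact n * qint ((n:ℤ)+1) := rfl
    rw [h0, ih, qint_eq n]
    have hv : v ^ (-(hh n:ℤ)) * v ^ (-(n:ℤ)) = v ^ (-(hh (n+1):ℤ)) := by
      rw [← zpow_add₀ v_ne]
      congr 1
      rw [hh_succ]
      push_cast
      ring
    calc v ^ (-(hh n:ℤ)) * qfa2 n * (v ^ (-(n:ℤ)) * qi2 (n+1))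
        = v ^ (-(hh n:ℤ)) * v ^ (-(n:ℤ)) * (qfa2 n * qi2 (n+1)) := by ring
      _ = v ^ (-(hh (n+1):ℤ)) * qfa2 (n+1) := by rw [hv]; rfl

lemma qfact_ne (n : ℕ) : qfact n ≠ 0 := by
  rw [qfact_eq]; exact mul_ne_zero (zpow_ne_zero _ v_ne) (qfa2_ne n)

lemma qi2_double (m : ℕ) : qi2 (2 * m) = qi2 m * (1 + v ^ (2 * m)) := by
  rw [two_mul, qi2_add]
  ring

lemma qi2_succ (m : ℕ) : qi2 (m + 1) = qi2 m + v ^ (2 * m) := by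
  rw [qi2, sum_range_succ]
  rfl

lemma qi4_succ (m : ℕ) : qi4 (m + 1) = qi4 m + v ^ (4 * m) := by
  rw [qi4, sum_range_succ]
  rfl

lemma qi2_double' (m : ℕ) : qi2 (2 * m) = (1 + v ^ 2) * qi4 m := by
  induction m with
  | zero => simp [qi2, qi4]
  | succ m ih =>
    have h1 : 2 * (m + 1) = 2 * m + 1 + 1 := by ring
    rw [h1, qi2_succ, qi2_succ, ih, qi4_succ]
    rw [show 2 * (2 * m) = 4 * m by ring, show 2 * (2 * m + 1) = 4 * m + 2 by ring,
      pow_add]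
    ring

lemma ddfact_eq (k : ℕ) : ddfact k = v ^ (-(k * k : ℤ)) * (qfa2 k * pf k) := by
  induction k with
  | zero => simp [ddfact, qfa2, pf]
  | succ k ih =>
    have h0 : ddfact (k+1) = ddfact k * qint (2 * ((k:ℤ) + 1)) := rfl
    rw [h0, ih, show (2 * ((k:ℤ) + 1)) = ((2*k+1 : ℕ):ℤ) + 1 by push_cast; ring,
      qint_eq (2*k+1), show (2*k+1) + 1 = 2*(k+1) by ring, qi2_double (k+1)]
    have hpf : pf (k+1) = pf k * (1 + v ^ (2*(k+1))) := by
      rw [pf, prod_range_succ]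
      rfl
    have hfa : qfa2 (k+1) = qfa2 k * qi2 (k+1) := rfl
    have hv : v ^ (-(k * k : ℤ)) * v ^ (-((2*k+1 : ℕ):ℤ)) = v ^ (-((k+1 : ℕ) * (k+1 : ℕ) : ℤ)) := by
      rw [← zpow_add₀ v_ne]
      congr 1
      push_cast
      ring
    rw [hpf, hfa, ← hv]
    push_cast
    ring

lemma ddfact_ne (k : ℕ) : ddfact k ≠ 0 := by
  rw [ddfact_eq]
  exact mul_ne_zero (zpow_ne_zero _ v_ne) (mul_ne_zero (qfa2_ne k) (pf_ne k))

lemma qfa4_eq (n : ℕ) : qfa4 n * (1 + v ^ 2) ^ n = qfa2 n * pf n := by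
  induction n with
  | zero => simp [qfa4, qfa2, pf]
  | succ n ih =>
    have key : (1 + v ^ 2) * qi4 (n+1) = qi2 (n+1) * (1 + v ^ (2*(n+1))) := by
      rw [← qi2_double', qi2_double]
    have hpf : pf (n+1) = pf n * (1 + v ^ (2*(n+1))) := by
      rw [pf, prod_range_succ]
      rfl
    calc qfa4 (n+1) * (1 + v ^ 2) ^ (n+1)
        = qfa4 n * (1 + v ^ 2) ^ n * ((1 + v ^ 2) * qi4 (n+1)) := by
          rw [show qfa4 (n+1) = qfa4 n * qi4 (n+1) from rfl]
          ring
      _ = qfa2 n * pf n * (qi2 (n+1) * (1 + v ^ (2*(n+1)))) := by rw [ih, key]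
      _ = qfa2 (n+1) * pf (n+1) := by
          rw [hpf, show qfa2 (n+1) = qfa2 n * qi2 (n+1) from rfl]
          ring

def Tsum (n : ℕ) : K :=
  ∑ k ∈ range (n + 1), v ^ ((2 * (k : ℤ) - n) * (2 * (k : ℤ) - n - 1)) * qb n k

lemma T_reflect (n : ℕ) :
    Tsum n = ∑ k ∈ range (n + 1), v ^ ((2 * (k : ℤ) - n) * (2 * (k : ℤ) - n + 1)) * qb n k := by
  rw [Tsum, ← sum_range_reflect]
  refine sum_congr rfl fun k hk => ?_
  have hk' : k ≤ n := by simpa [Nat.lt_succ_iff] using hk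
  rw [show n + 1 - 1 - k = n - k from by omega, qb_symm hk']
  congr 2
  push_cast [Nat.cast_sub hk']
  ring

def Faux (n k : ℕ) : K :=
  v ^ ((2 * (k : ℤ) - ((n+1 : ℕ) : ℤ)) * (2 * (k : ℤ) - ((n+1 : ℕ) : ℤ) - 1) + 4 * (k : ℤ)) * qb n k

lemma Faux_top (n : ℕ) : Faux n (n + 1) = 0 := by
  rw [Faux, qb_of_lt (by omega), mul_zero]

lemma T_succ (n : ℕ) : Tsum (n + 1) = (1 + v ^ (2 * (n + 1))) * Tsum n := by
  have key : ∀ k ∈ range (n + 1),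
      v ^ ((2 * ((k+1 : ℕ) : ℤ) - ((n+1 : ℕ) : ℤ)) * (2 * ((k+1 : ℕ) : ℤ) - ((n+1 : ℕ) : ℤ) - 1))
          * qb (n + 1) (k + 1)
        = (Faux n (k + 1) - Faux n k)
          + v ^ (2 * ((n : ℤ) + 1)) * (v ^ ((2 * (k : ℤ) - n) * (2 * (k : ℤ) - n - 1)) * qb n k)
          + v ^ ((2 * (k : ℤ) - n) * (2 * (k : ℤ) - n + 1)) * qb n k := by
    intro k _
    have hq : qb (n + 1) (k + 1) = v ^ (4 * (k + 1)) * qb n (k + 1) + qb n k := rfl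
    rw [hq, mul_add]
    have p1 : v ^ ((2 * ((k+1 : ℕ) : ℤ) - ((n+1 : ℕ) : ℤ)) * (2 * ((k+1 : ℕ) : ℤ) - ((n+1 : ℕ) : ℤ) - 1))
          * (v ^ (4 * (k + 1)) * qb n (k + 1)) = Faux n (k + 1) := by
      rw [Faux, ← zpow_natCast v (4 * (k + 1)), ← mul_assoc, ← zpow_add₀ v_ne]
      congr 2 <;> (push_cast; try ring)
    have p2 : v ^ ((2 * ((k+1 : ℕ) : ℤ) - ((n+1 : ℕ) : ℤ)) * (2 * ((k+1 : ℕ) : ℤ) - ((n+1 : ℕ) : ℤ) - 1))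
          * qb n k = v ^ ((2 * (k : ℤ) - n) * (2 * (k : ℤ) - n + 1)) * qb n k := by
      congr 2 <;> (push_cast; try ring)
    have p3 : Faux n k
        = v ^ (2 * ((n : ℤ) + 1)) * (v ^ ((2 * (k : ℤ) - n) * (2 * (k : ℤ) - n - 1)) * qb n k) := by
      rw [Faux, ← mul_assoc, ← zpow_add₀ v_ne]
      congr 2 <;> (push_cast; try ring)
    rw [p1, p2, p3]
    ring
  rw [Tsum, sum_range_succ', sum_congr rfl key, sum_add_distrib, sum_add_distrib,
    sum_range_sub (Faux n), Faux_top, ← mul_sum, ← Tsum, ← T_reflect]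
  have hb : v ^ ((2 * ((0:ℕ) : ℤ) - ((n+1 : ℕ) : ℤ)) * (2 * ((0:ℕ) : ℤ) - ((n+1 : ℕ) : ℤ) - 1))
      * qb (n + 1) 0 = Faux n 0 := by
    rw [Faux, qb_zero, qb_zero]
    congr 1 <;> (push_cast; try ring)
  rw [hb]
  have hv : v ^ (2 * ((n : ℤ) + 1)) = v ^ (2 * (n + 1)) := by
    rw [← zpow_natCast v (2 * (n + 1))]
    congr 1 <;> (push_cast; try ring)
  rw [hv]
  ring

lemma T_eq (n : ℕ) : Tsum n = pf n := by
  induction n with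
  | zero => simp [Tsum, pf, qb]
  | succ n ih =>
    rw [T_succ, ih]
    unfold pf
    rw [prod_range_succ, mul_comm]

lemma vdiv (a b : ℤ) (X : K) : v ^ a / (v ^ b * X) = v ^ (a - b) / X := by
  rw [div_mul_eq_div_div, ← zpow_sub₀ v_ne]

lemma qc_symm {n k : ℕ} (h : k ≤ n) : qc n (n - k) = qc n k := by
  rw [qc_eq h, qc_eq (Nat.sub_le n k), Nat.sub_sub_self h, mul_comm]

lemma U_eq (n : ℕ) :
    ∑ k ∈ range (n + 1), v ^ (-2 * ((k : ℤ) - 1) * ((n : ℤ) - k)) / (ddfact k * ddfact (n - k))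
      = v ^ ((n : ℤ) - hh n) / qfact n := by
  have step1 : ∀ k ∈ range (n + 1),
      v ^ (-2 * ((k : ℤ) - 1) * ((n : ℤ) - k)) / (ddfact k * ddfact (n - k))
        = v ^ (n : ℤ) / (qfa2 n * pf n)
            * (v ^ ((2 * (k : ℤ) - n) * (2 * (k : ℤ) - n - 1)) * qb n k) := by
    intro k hk
    have hk' : k ≤ n := by simpa [Nat.lt_succ_iff] using hk
    rw [ddfact_eq k, ddfact_eq (n - k), mul_mul_mul_comm, ← zpow_add₀ v_ne, vdiv, qb_eq hk']
    have c1 : qfa4 k * (1 + v ^ 2) ^ k = qfa2 k * pf k := qfa4_eq k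
    have c2 : qfa4 (n - k) * (1 + v ^ 2) ^ (n - k) = qfa2 (n - k) * pf (n - k) := qfa4_eq (n - k)
    have c3 : qfa4 n * (1 + v ^ 2) ^ n = qfa2 n * pf n := qfa4_eq n
    have hpow : (1 + v ^ 2) ^ n = (1 + v ^ 2) ^ k * (1 + v ^ 2) ^ (n - k) := by
      rw [← pow_add, Nat.add_sub_cancel' hk']
    have hvz : v ^ (-2 * ((k : ℤ) - 1) * ((n : ℤ) - k) - (-(k * k : ℤ) + -((n - k : ℕ) * (n - k : ℕ) : ℤ)))
        = v ^ ((n : ℤ)) * v ^ ((2 * (k : ℤ) - n) * (2 * (k : ℤ) - n - 1)) := by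
      rw [← zpow_add₀ v_ne]
      congr 1
      push_cast [Nat.cast_sub hk']
      ring
    have n1 := qfa2_ne n
    have n2 := qfa2_ne k
    have n3 := qfa2_ne (n - k)
    have n4 := pf_ne n
    have n5 := pf_ne k
    have n6 := pf_ne (n - k)
    have n7 := qfa4_ne n
    have n8 := qfa4_ne k
    have n9 := qfa4_ne (n - k)
    have n10 : (1 + v ^ 2) ^ n ≠ 0 := pow_ne_zero _ (one_add_ne 2)
    rw [div_eq_iff (by exact mul_ne_zero (mul_ne_zero n2 n5) (mul_ne_zero n3 n6))]
    rw [hvz]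
    field_simp
    apply mul_right_cancel₀ n10
    linear_combination (-(v ^ (n : ℤ) * v ^ ((2 * (k : ℤ) - n) * (2 * (k : ℤ) - n - 1)) * (1 + v ^ 2) ^ n) * qfa4 k * qfa4 (n - k)) * c3
      + (v ^ (n : ℤ) * v ^ ((2 * (k : ℤ) - n) * (2 * (k : ℤ) - n - 1)) * (1 + v ^ 2) ^ n) * qfa4 n * qfa4 k * qfa4 (n - k) * hpow
      + (v ^ (n : ℤ) * v ^ ((2 * (k : ℤ) - n) * (2 * (k : ℤ) - n - 1)) * (1 + v ^ 2) ^ n) * qfa4 n * qfa2 (n - k) * pf (n - k) * c1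
      + (v ^ (n : ℤ) * v ^ ((2 * (k : ℤ) - n) * (2 * (k : ℤ) - n - 1)) * (1 + v ^ 2) ^ n) * qfa4 n * qfa4 k * (1 + v ^ 2) ^ k * c2
  rw [sum_congr rfl step1, ← mul_sum, ← Tsum, T_eq]
  rw [qfact_eq, vdiv, show (n:ℤ) - (hh n:ℤ) - -(hh n:ℤ) = (n:ℤ) by ring]
  have n1 := qfa2_ne n
  have n4 := pf_ne n
  field_simp

def Gaux (d r : ℕ) : K := (-1 : K) ^ r * v ^ (r * (r + 1)) * qc d r

lemma G_eq (d : ℕ) :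
    ∑ r ∈ range (d + 2), (-1 : K) ^ r * v ^ (r * (r - 1) : ℕ) * qc (d + 1) r = 0 := by
  have key : ∀ r ∈ range (d + 1),
      (-1 : K) ^ (r + 1) * v ^ ((r + 1) * (r + 1 - 1) : ℕ) * qc (d + 1) (r + 1)
        = Gaux d (r + 1) - Gaux d r := by
    intro r _
    have hq : qc (d + 1) (r + 1) = v ^ (2 * (r + 1)) * qc d (r + 1) + qc d r := rfl
    rw [hq, Gaux, Gaux, Nat.add_sub_cancel]
    rw [show (r+1) * ((r+1) + 1) = (r + 1) * r + 2 * (r + 1) by ring, pow_add]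
    rw [show r * (r + 1) = (r + 1) * r by ring]
    ring
  rw [sum_range_succ', sum_congr rfl key, sum_range_sub (Gaux d)]
  have h1 : Gaux d (d + 1) = 0 := by rw [Gaux, qc_of_lt (by omega), mul_zero]
  have h2 : Gaux d 0 = 1 := by rw [Gaux, qc_zero]; norm_num
  rw [h1, h2, qc_zero]
  norm_num

lemma cast_jj (j : ℕ) : ((j * (j - 1) : ℕ) : ℤ) = (j : ℤ) * (j : ℤ) - (j : ℤ) := by
  cases j with
  | zero => simp
  | succ i =>
    push_cast [Nat.succ_sub_one]
    ring

lemma reindex_aux (N : ℕ) (f : ℕ → ℕ → K) :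
    ∑ k ∈ range (N + 1), ∑ m ∈ range (N + 1 - k), f k m
      = ∑ n ∈ range (N + 1), ∑ k ∈ range (n + 1), f k (n - k) := by
  rw [← Finset.sum_sigma (range (N + 1)) (fun k => range (N + 1 - k)) (fun p => f p.1 p.2),
    ← Finset.sum_sigma (range (N + 1)) (fun n => range (n + 1)) (fun p => f p.2 (p.1 - p.2))]
  apply Finset.sum_nbij' (i := fun p => ⟨p.1 + p.2, p.1⟩) (j := fun p => ⟨p.2, p.1 - p.2⟩)
  · rintro ⟨k, m⟩ hp
    simp only [Finset.mem_sigma, Finset.mem_range] at hp ⊢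
    omega
  · rintro ⟨n, k⟩ hp
    simp only [Finset.mem_sigma, Finset.mem_range] at hp ⊢
    omega
  · rintro ⟨k, m⟩ hp
    simp only [Finset.mem_sigma, Finset.mem_range] at hp
    simp only [Sigma.mk.inj_iff, heq_eq_eq, true_and, and_true]
    omega
  · rintro ⟨n, k⟩ hp
    simp only [Finset.mem_sigma, Finset.mem_range] at hp
    simp only [Sigma.mk.inj_iff, heq_eq_eq, true_and, and_true]
    omega
  · rintro ⟨k, m⟩ hp
    simp only [Finset.mem_sigma, Finset.mem_range] at hp
    simp only [Nat.add_sub_cancel_left]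

end TSV

theorem triple_sum_vanishes (d : ℕ) (hd : 1 ≤ d) :
    ∑ k ∈ range (d + 1), ∑ m ∈ range (d + 1 - k),
      (-1 : K) ^ (d - k - m) *
        v ^ ((((d : ℤ) - k - m) * ((d : ℤ) - k - m + 1)) / 2 - 2 * ((k : ℤ) - 1) * (m : ℤ))
        / (qfact (d - k - m) * ddfact k * ddfact m) = 0 := by
  rw [TSV.reindex_aux d (fun k m => (-1 : K) ^ (d - k - m) *
        v ^ ((((d : ℤ) - k - m) * ((d : ℤ) - k - m + 1)) / 2 - 2 * ((k : ℤ) - 1) * (m : ℤ))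
        / (qfact (d - k - m) * ddfact k * ddfact m))]
  have inner : ∀ n ∈ range (d + 1),
      ∑ k ∈ range (n + 1), ((-1 : K) ^ (d - k - (n - k)) *
        v ^ ((((d : ℤ) - k - ((n - k : ℕ) : ℤ)) * ((d : ℤ) - k - ((n - k : ℕ) : ℤ) + 1)) / 2
            - 2 * ((k : ℤ) - 1) * ((n - k : ℕ) : ℤ))
        / (qfact (d - k - (n - k)) * ddfact k * ddfact (n - k)))
      = ((-1 : K) ^ (d - n) * v ^ ((TSV.hh (d - n + 1) : ℤ)) / qfact (d - n))
          * (v ^ ((n : ℤ) - TSV.hh n) / qfact n) := by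
    intro n hn
    have hn' : n ≤ d := by simpa [Nat.lt_succ_iff] using hn
    rw [← TSV.U_eq n, mul_sum]
    refine sum_congr rfl fun k hk => ?_
    have hk' : k ≤ n := by simpa [Nat.lt_succ_iff] using hk
    rw [show d - k - (n - k) = d - n from by omega, Nat.cast_sub hk',
      show (d : ℤ) - k - ((n : ℤ) - k) = ((d - n : ℕ) : ℤ) from by rw [Nat.cast_sub hn']; ring,
      TSV.hh_cast (d - n)]
    rw [div_mul_div_comm]
    congr 1
    · rw [mul_assoc ((-1 : K) ^ (d - n)), ← zpow_add₀ TSV.v_ne]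
      congr 2
      ring
    · rw [mul_assoc]
  rw [sum_congr rfl inner]
  have outer : ∀ n ∈ range (d + 1),
      ((-1 : K) ^ (d - n) * v ^ ((TSV.hh (d - n + 1) : ℤ)) / qfact (d - n))
          * (v ^ ((n : ℤ) - TSV.hh n) / qfact n)
      = ((-1 : K) ^ (d - n) * (v ^ (((d - n) * (d - n) : ℕ) : ℤ) * v ^ ((n : ℤ)))
          * TSV.qc d n) / TSV.qfa2 d := by
    intro n hn
    have hn' : n ≤ d := by simpa [Nat.lt_succ_iff] using hn
    rw [TSV.qfact_eq (d - n), TSV.qfact_eq n, mul_div_assoc, TSV.vdiv, TSV.vdiv,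
      TSV.qc_eq hn',
      show ((TSV.hh (d - n + 1) : ℤ)) - -(TSV.hh (d - n) : ℤ) = (((d - n) * (d - n) : ℕ) : ℤ) from by
        have := TSV.hh_add (d - n); push_cast [← this]; ring,
      show ((n : ℤ) - TSV.hh n) - -(TSV.hh n : ℤ) = (n : ℤ) from by ring]
    have n1 := TSV.qfa2_ne d
    have n2 := TSV.qfa2_ne n
    have n3 := TSV.qfa2_ne (d - n)
    field_simp
  rw [sum_congr rfl outer, ← sum_div]
  have reflect : ∑ n ∈ range (d + 1),
      ((-1 : K) ^ (d - n) * (v ^ (((d - n) * (d - n) : ℕ) : ℤ) * v ^ ((n : ℤ))) * TSV.qc d n)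
      = v ^ ((d : ℤ)) * ∑ r ∈ range (d + 1), (-1 : K) ^ r * v ^ (r * (r - 1) : ℕ) * TSV.qc d r := by
    rw [← sum_range_reflect, mul_sum]
    refine sum_congr rfl fun j hj => ?_
    have hj' : j ≤ d := by simpa [Nat.lt_succ_iff] using hj
    rw [show d + 1 - 1 - j = d - j from by omega, show d - (d - j) = j from by omega,
      TSV.qc_symm hj']
    have hv : v ^ ((j * j : ℕ) : ℤ) * v ^ (((d - j : ℕ)) : ℤ)
        = v ^ ((d : ℤ)) * v ^ ((j * (j - 1) : ℕ) : ℤ) := by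
      rw [← zpow_add₀ TSV.v_ne, ← zpow_add₀ TSV.v_ne]
      congr 1
      rw [TSV.cast_jj, Nat.cast_sub hj']
      push_cast
      ring
    calc (-1 : K) ^ j * (v ^ ((j * j : ℕ) : ℤ) * v ^ (((d - j : ℕ)) : ℤ)) * TSV.qc d j
        = v ^ ((d : ℤ)) * ((-1 : K) ^ j * v ^ ((j * (j - 1) : ℕ) : ℤ) * TSV.qc d j) := by
          rw [hv]; ring
      _ = v ^ ((d : ℤ)) * ((-1 : K) ^ j * v ^ (j * (j - 1) : ℕ) * TSV.qc d j) := by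
          rw [zpow_natCast v (j * (j - 1))]
  rw [reflect]
  obtain ⟨e, rfl⟩ : ∃ e, d = e + 1 := ⟨d - 1, by omega⟩
  rw [show e + 1 + 1 = e + 2 from rfl, TSV.G_eq e, mul_zero, zero_div]
end
end

section
/- Let q be a prime power and let 𝔽_q be the finite field with q elements. For integers s, t ≥ 0 and 0 ≤ r ≤ min(s,t), the number of s×t matrices over 𝔽_q of rank r equals ∏_{j=0}^{r-1} (q^s - q^j)(q^t - q^j)/(q^r - q^j). -/
set_option synthInstance.maxHeartbeats 1000000
set_option maxHeartbeats 1000000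

open Finset

section Aux

open Module Function

theorem CardRankAux.nat_card_fiber_sum {α β : Type*} [Finite α] [Fintype β] (ρ : α → β) :
    Nat.card α = ∑ b : β, Nat.card {a : α // ρ a = b} := by
  classical
  have := Fintype.ofFinite α
  calc Nat.card α = Nat.card (Σ b : β, {a : α // ρ a = b}) :=
        (Nat.card_congr (Equiv.sigmaFiberEquiv ρ)).symm
    _ = ∑ b : β, Nat.card {a : α // ρ a = b} := by
        rw [Nat.card_eq_fintype_card, Fintype.card_sigma]
        exact Finset.sum_congr rfl fun b _ => (Nat.card_eq_fintype_card).symm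

instance CardRankAux.flm (F M N : Type*) [Field F] [AddCommGroup M] [AddCommGroup N]
    [Module F M] [Module F N] [Finite M] [Finite N] : Finite (M →ₗ[F] N) :=
  Finite.of_injective (fun f => (f : M → N)) DFunLike.coe_injective

theorem CardRankAux.inj_iff_li (F : Type) [Field F] (W : Type) [AddCommGroup W] [Module F W]
    (k : ℕ) (f : (Fin k → F) →ₗ[F] W) :
    Function.Injective f ↔ LinearIndependent F (fun i => f (Pi.basisFun F (Fin k) i)) := by
  constructor
  · intro hf
    exact (Pi.basisFun F (Fin k)).linearIndependent.map' f (LinearMap.ker_eq_bot.2 hf)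
  · intro hli
    rw [← LinearMap.ker_eq_bot, eq_bot_iff]
    intro x hx
    have hx0 : f x = 0 := hx
    have hrep : x = ∑ i, x i • (Pi.basisFun F (Fin k)) i := by
      ext j
      simp [Finset.sum_apply, Pi.single_apply]
    have hsum : ∑ i, x i • f ((Pi.basisFun F (Fin k)) i) = 0 := by
      have : f (∑ i, x i • (Pi.basisFun F (Fin k)) i)
          = ∑ i, x i • f ((Pi.basisFun F (Fin k)) i) := by
        simp [map_sum, map_smul]
      rw [← this, ← hrep, hx0]
    have hz := (Fintype.linearIndependent_iff.1 hli) _ hsum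
    have : x = 0 := funext hz
    simp [this]

theorem CardRankAux.cardInj (F : Type) [Field F] [Fintype F] (W : Type) [AddCommGroup W]
    [Module F W] [Finite W] (k : ℕ) (hk : k ≤ finrank F W) :
    Nat.card {f : (Fin k → F) →ₗ[F] W // Function.Injective f} =
      ∏ j ∈ range k, (Fintype.card F ^ finrank F W - Fintype.card F ^ j) := by
  have e : {f : (Fin k → F) →ₗ[F] W // Function.Injective f} ≃
      {v : Fin k → W // LinearIndependent F v} := by
    refine Equiv.subtypeEquiv ((Pi.basisFun F (Fin k)).constr (M' := W) F).toEquiv.symm ?_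
    intro f
    have : ((Pi.basisFun F (Fin k)).constr (M' := W) F).toEquiv.symm f
        = fun i => f (Pi.basisFun F (Fin k) i) := by
      apply ((Pi.basisFun F (Fin k)).constr (M' := W) F).toEquiv.symm_apply_eq.2
      exact ((Pi.basisFun F (Fin k)).constr_self F f).symm
    rw [this]
    exact CardRankAux.inj_iff_li F W k f
  rw [Nat.card_congr e, card_linearIndependent hk]
  rw [Finset.prod_range fun j => (Fintype.card F ^ finrank F W - Fintype.card F ^ j)]

theorem CardRankAux.cardGrass (F : Type) [Field F] [Fintype F] (s r : ℕ) (hr : r ≤ s) :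
    (Nat.card {U : Submodule F (Fin s → F) // finrank F U = r}) *
      ∏ j ∈ range r, (Fintype.card F ^ r - Fintype.card F ^ j)
    = ∏ j ∈ range r, (Fintype.card F ^ s - Fintype.card F ^ j) := by
  classical
  have hfinsub : Finite (Submodule F (Fin s → F)) :=
    Finite.of_injective (fun U => (U : Set (Fin s → F))) SetLike.coe_injective
  have := Fintype.ofFinite {U : Submodule F (Fin s → F) // finrank F U = r}
  set Inj := {f : (Fin r → F) →ₗ[F] (Fin s → F) // Function.Injective f} with hInj
  have hrange : ∀ f : Inj, finrank F (LinearMap.range f.1) = r := by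
    intro f
    rw [← (LinearEquiv.ofInjective f.1 f.2).finrank_eq]
    simp [Module.finrank_fintype_fun_eq_card]
  let ρ : Inj → {U : Submodule F (Fin s → F) // finrank F U = r} :=
    fun f => ⟨LinearMap.range f.1, hrange f⟩
  have key := CardRankAux.nat_card_fiber_sum ρ
  have hfib : ∀ U : {U : Submodule F (Fin s → F) // finrank F U = r},
      Nat.card {f : Inj // ρ f = U}
        = ∏ j ∈ range r, (Fintype.card F ^ r - Fintype.card F ^ j) := by
    intro U
    have hU : finrank F U.1 = r := U.2
    have e : {f : Inj // ρ f = U} ≃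
        {g : (Fin r → F) →ₗ[F] U.1 // Function.Injective g} := by
      refine ⟨fun f => ⟨LinearMap.codRestrict U.1 f.1.1
          (fun x => by
            have : f.1.1 x ∈ LinearMap.range f.1.1 := LinearMap.mem_range_self _ x
            rw [show LinearMap.range f.1.1 = U.1 from congrArg Subtype.val f.2] at this
            exact this), ?_⟩,
        fun g => ⟨⟨U.1.subtype.comp g.1, ?_⟩, ?_⟩, ?_, ?_⟩
      · intro x y hxy
        apply f.1.2
        exact congrArg Subtype.val hxy
      · exact (U.1.injective_subtype).comp g.2
      · apply Subtype.ext
        show LinearMap.range (U.1.subtype.comp g.1) = U.1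
        have hsurj : Function.Surjective g.1 := by
          rw [← LinearMap.range_eq_top]
          apply Submodule.eq_top_of_finrank_eq
          rw [← (LinearEquiv.ofInjective g.1 g.2).finrank_eq]
          simp [Module.finrank_fintype_fun_eq_card, hU]
        rw [LinearMap.range_comp, LinearMap.range_eq_top.2 hsurj]
        exact Submodule.map_subtype_top U.1
      · intro f
        apply Subtype.ext; apply Subtype.ext
        rfl
      · intro g
        apply Subtype.ext
        rfl
    rw [Nat.card_congr e]
    have : Finite U.1 := Finite.of_injective _ U.1.injective_subtype
    rw [CardRankAux.cardInj F U.1 r (by rw [hU])]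
    rw [hU]
  have hsum : ∑ U : {U : Submodule F (Fin s → F) // finrank F U = r},
      Nat.card {f : Inj // ρ f = U} =
      (Nat.card {U : Submodule F (Fin s → F) // finrank F U = r}) *
        ∏ j ∈ range r, (Fintype.card F ^ r - Fintype.card F ^ j) := by
    rw [Finset.sum_congr rfl fun U _ => hfib U, Finset.sum_const, Nat.card_eq_fintype_card]
    simp [mul_comm]
  rw [hsum] at key
  rw [← key, hInj, CardRankAux.cardInj F (Fin s → F) r
    (by simpa [Module.finrank_fintype_fun_eq_card] using hr)]
  simp [Module.finrank_fintype_fun_eq_card]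

theorem CardRankAux.rank_eq_iff_surj (F : Type) [Field F] {r t : ℕ}
    (M : Matrix (Fin r) (Fin t) F) :
    M.rank = r ↔ Surjective M.mulVecLin := by
  rw [← LinearMap.range_eq_top, Matrix.rank]
  constructor
  · intro h
    apply Submodule.eq_top_of_finrank_eq
    rw [h, Module.finrank_fintype_fun_eq_card, Fintype.card_fin]
  · intro h
    rw [h, finrank_top, Module.finrank_fintype_fun_eq_card, Fintype.card_fin]

theorem CardRankAux.rank_eq_iff_inj (F : Type) [Field F] {r t : ℕ}
    (M : Matrix (Fin t) (Fin r) F) :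
    M.rank = r ↔ Injective M.mulVecLin := by
  rw [← LinearMap.ker_eq_bot, Matrix.rank]
  have hrn := LinearMap.finrank_range_add_finrank_ker M.mulVecLin
  rw [Module.finrank_fintype_fun_eq_card, Fintype.card_fin] at hrn
  constructor
  · intro h
    rw [← Submodule.finrank_eq_zero (R := F)]
    omega
  · intro h
    rw [h, finrank_bot] at hrn
    omega

theorem CardRankAux.cardSurj (F : Type) [Field F] [Fintype F] (W : Type) [AddCommGroup W]
    [Module F W] [Finite W] (t r : ℕ) (hW : finrank F W = r) (hrt : r ≤ t) :
    Nat.card {g : (Fin t → F) →ₗ[F] W // Surjective g} =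
      ∏ j ∈ range r, (Fintype.card F ^ t - Fintype.card F ^ j) := by
  have : Module.Finite F W := Module.Finite.of_finite
  let e : W ≃ₗ[F] (Fin r → F) := (Module.finBasisOfFinrankEq F W hW).equivFun
  have e1 : {g : (Fin t → F) →ₗ[F] W // Surjective g} ≃
      {g : (Fin t → F) →ₗ[F] (Fin r → F) // Surjective g} :=
    ⟨fun g => ⟨e.toLinearMap.comp g.1, e.surjective.comp g.2⟩,
     fun g => ⟨e.symm.toLinearMap.comp g.1, e.symm.surjective.comp g.2⟩,
     fun g => by apply Subtype.ext; ext x; simp,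
     fun g => by apply Subtype.ext; ext x; simp⟩
  have e2 : {g : (Fin t → F) →ₗ[F] (Fin r → F) // Surjective g} ≃
      {M : Matrix (Fin r) (Fin t) F // M.rank = r} := by
    refine (Equiv.subtypeEquiv LinearMap.toMatrix'.toEquiv ?_)
    intro g
    rw [CardRankAux.rank_eq_iff_surj]
    have : (LinearMap.toMatrix'.toEquiv g : Matrix (Fin r) (Fin t) F).mulVecLin = g := by
      show Matrix.mulVecLin (LinearMap.toMatrix' g) = g
      rw [← Matrix.toLin'_apply', Matrix.toLin'_toMatrix']
    rw [this]
  have e3 : {M : Matrix (Fin r) (Fin t) F // M.rank = r} ≃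
      {M : Matrix (Fin t) (Fin r) F // M.rank = r} :=
    ⟨fun M => ⟨M.1.transpose, by rw [Matrix.rank_transpose]; exact M.2⟩,
     fun M => ⟨M.1.transpose, by rw [Matrix.rank_transpose]; exact M.2⟩,
     fun M => by apply Subtype.ext; simp,
     fun M => by apply Subtype.ext; simp⟩
  have e4 : {M : Matrix (Fin t) (Fin r) F // M.rank = r} ≃
      {h : (Fin r → F) →ₗ[F] (Fin t → F) // Injective h} := by
    refine (Equiv.subtypeEquiv (LinearMap.toMatrix' (R := F)).toEquiv.symm ?_)
    intro M
    rw [CardRankAux.rank_eq_iff_inj]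
    have : (LinearMap.toMatrix'.toEquiv.symm M : (Fin r → F) →ₗ[F] (Fin t → F))
        = M.mulVecLin := by
      show LinearMap.toMatrix'.symm M = M.mulVecLin
      rw [← Matrix.toLin'_apply']
      rfl
    rw [this]
  rw [Nat.card_congr (((e1.trans e2).trans e3).trans e4),
    CardRankAux.cardInj F (Fin t → F) r
      (by simp [Module.finrank_fintype_fun_eq_card]; omega)]
  simp [Module.finrank_fintype_fun_eq_card]

theorem CardRankAux.card_rank_eq (F : Type) [Field F] [Fintype F] (s t r : ℕ) (hrt : r ≤ t) :
    Nat.card {A : Matrix (Fin s) (Fin t) F // A.rank = r} =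
      (Nat.card {U : Submodule F (Fin s → F) // finrank F U = r}) *
        ∏ j ∈ range r, (Fintype.card F ^ t - Fintype.card F ^ j) := by
  classical
  have hfinsub : Finite (Submodule F (Fin s → F)) :=
    Finite.of_injective (fun U => (U : Set (Fin s → F))) SetLike.coe_injective
  have := Fintype.ofFinite {U : Submodule F (Fin s → F) // finrank F U = r}
  let ρ : {A : Matrix (Fin s) (Fin t) F // A.rank = r} →
      {U : Submodule F (Fin s → F) // finrank F U = r} :=
    fun A => ⟨LinearMap.range A.1.mulVecLin, A.2⟩
  have key := CardRankAux.nat_card_fiber_sum ρ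
  have hfib : ∀ U : {U : Submodule F (Fin s → F) // finrank F U = r},
      Nat.card {A : {A : Matrix (Fin s) (Fin t) F // A.rank = r} // ρ A = U} =
        ∏ j ∈ range r, (Fintype.card F ^ t - Fintype.card F ^ j) := by
    intro U
    have hUfin : Finite U.1 := Finite.of_injective _ U.1.injective_subtype
    have e : {A : {A : Matrix (Fin s) (Fin t) F // A.rank = r} // ρ A = U} ≃
        {g : (Fin t → F) →ₗ[F] U.1 // Surjective g} := by
      refine ⟨fun A => ⟨LinearMap.codRestrict U.1 A.1.1.mulVecLin
          (fun x => by
            have : A.1.1.mulVecLin x ∈ LinearMap.range A.1.1.mulVecLin :=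
              LinearMap.mem_range_self _ x
            rwa [show LinearMap.range A.1.1.mulVecLin = U.1 from
              congrArg Subtype.val A.2] at this), ?_⟩,
        fun g => ⟨⟨LinearMap.toMatrix' (U.1.subtype.comp g.1), ?_⟩, ?_⟩, ?_, ?_⟩
      · rintro ⟨y, hy⟩
        rw [← show LinearMap.range A.1.1.mulVecLin = U.1 from congrArg Subtype.val A.2]
          at hy
        obtain ⟨x, hx⟩ := hy
        exact ⟨x, Subtype.ext hx⟩
      · show Matrix.rank _ = r
        rw [Matrix.rank, ← Matrix.toLin'_apply', Matrix.toLin'_toMatrix',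
          LinearMap.range_comp, LinearMap.range_eq_top.2 g.2, Submodule.map_subtype_top]
        exact U.2
      · apply Subtype.ext
        show LinearMap.range (Matrix.mulVecLin _) = U.1
        rw [← Matrix.toLin'_apply', Matrix.toLin'_toMatrix',
          LinearMap.range_comp, LinearMap.range_eq_top.2 g.2, Submodule.map_subtype_top]
      · intro A
        apply Subtype.ext; apply Subtype.ext
        show LinearMap.toMatrix' (U.1.subtype.comp _) = A.1.1
        rw [LinearMap.subtype_comp_codRestrict, ← Matrix.toLin'_apply',
          LinearMap.toMatrix'_toLin']
      · intro g
        apply Subtype.ext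
        apply LinearMap.ext; intro x
        apply Subtype.ext
        show (Matrix.mulVecLin (LinearMap.toMatrix' (U.1.subtype.comp g.1))) x
          = (g.1 x : Fin s → F)
        rw [← Matrix.toLin'_apply', Matrix.toLin'_toMatrix']
        rfl
    rw [Nat.card_congr e]
    exact CardRankAux.cardSurj F U.1 t r U.2 hrt
  rw [key, Finset.sum_congr rfl fun U _ => hfib U, Finset.sum_const,
    Nat.card_eq_fintype_card]
  simp [mul_comm]

end Aux

/-- The number of s x t matrices over a finite field with q elements having rank r
equals the product formula. -/
theorem card_rank_r_matrices (F : Type) [Field F] [Fintype F] (s t r : ℕ)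
    (hr : r ≤ min s t) :
    (Nat.card {A : Matrix (Fin s) (Fin t) F // A.rank = r} : ℚ)
    = ∏ j ∈ range r,
        (((Fintype.card F : ℚ) ^ s - (Fintype.card F : ℚ) ^ j) *
          ((Fintype.card F : ℚ) ^ t - (Fintype.card F : ℚ) ^ j)) /
          ((Fintype.card F : ℚ) ^ r - (Fintype.card F : ℚ) ^ j) := by
  have hrs : r ≤ s := le_trans hr (min_le_left s t)
  have hrt : r ≤ t := le_trans hr (min_le_right s t)
  have hq : 1 < Fintype.card F := Fintype.one_lt_card
  set q := Fintype.card F with hqdef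
  have hcast : ∀ (n : ℕ), r ≤ n → ((∏ j ∈ range r, (q ^ n - q ^ j) : ℕ) : ℚ)
      = ∏ j ∈ range r, ((q : ℚ) ^ n - (q : ℚ) ^ j) := by
    intro n hn
    rw [Nat.cast_prod]
    refine Finset.prod_congr rfl fun j hj => ?_
    have hj' : j < r := Finset.mem_range.1 hj
    have : q ^ j ≤ q ^ n := Nat.pow_le_pow_right (le_of_lt hq) (le_trans hj'.le hn)
    push_cast [Nat.cast_sub this]
    ring
  have hR : ((∏ j ∈ range r, (q ^ r - q ^ j) : ℕ) : ℚ)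
      = ∏ j ∈ range r, ((q : ℚ) ^ r - (q : ℚ) ^ j) := hcast r le_rfl
  have hRpos : 0 < ∏ j ∈ range r, (q ^ r - q ^ j) := by
    refine Finset.prod_pos fun j hj => ?_
    have hj' : j < r := Finset.mem_range.1 hj
    have := Nat.pow_lt_pow_right hq hj'
    omega
  have hG := CardRankAux.cardGrass F s r hrs
  have hC := CardRankAux.card_rank_eq F s t r hrt
  have hRne : (∏ j ∈ range r, ((q : ℚ) ^ r - (q : ℚ) ^ j)) ≠ 0 := by
    rw [← hR]
    exact_mod_cast hRpos.ne'
  rw [hC, Nat.cast_mul, hcast t hrt]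
  have hGQ : (Nat.card {U : Submodule F (Fin s → F) // Module.finrank F U = r} : ℚ)
      = (∏ j ∈ range r, ((q : ℚ) ^ s - (q : ℚ) ^ j))
        / (∏ j ∈ range r, ((q : ℚ) ^ r - (q : ℚ) ^ j)) := by
    rw [eq_div_iff hRne, ← hR, ← hcast s hrs, ← Nat.cast_mul, hG]
  rw [hGQ, Finset.prod_div_distrib, Finset.prod_mul_distrib]
  ring
end
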